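/- arXiv:2010.00970 — 2 statements merged into one kernel-verified Lean document; each statement's English description precedes it below -/
import Mathlib

section
/- Let φ : ℕ → ℝ≥0 be nondecreasing, concave, with φ(0) = 0 and φ(1) = 1, and let φ also denote its piecewise linear extension to ℝ≥0. Define α_φ(x) = E[φ(Poi(x))]/φ(x) for x > 0 and α_φ(0) = 1. Then for all x ∈ ℝ≥0, α_φ(x) ≥ min{α_φ(⌊x⌋), α_φ(⌈x⌉)}. -/
/-- The Poisson expectation `E[φ(Poi x)]`. -/
noncomputable def poiExp (φ : ℕ → ℝ) (x : ℝ) : ℝ :=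
  ∑' k : ℕ, Real.exp (-x) * x ^ k / (Nat.factorial k) * φ k

/-- The piecewise linear extension of `φ : ℕ → ℝ` to `ℝ≥0`. -/
noncomputable def phiExt (φ : ℕ → ℝ) (x : ℝ) : ℝ :=
  φ ⌊x⌋₊ + (x - ⌊x⌋₊) * (φ (⌊x⌋₊ + 1) - φ ⌊x⌋₊)

/-- The Poisson concavity ratio `α_φ(x) = E[φ(Poi x)] / φ(x)`, with `α_φ(0) = 1`. -/
noncomputable def alphaRatio (φ : ℕ → ℝ) (x : ℝ) : ℝ :=
  if x = 0 then 1 else poiExp φ x / phiExt φ x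


noncomputable def pSum (φ : ℕ → ℝ) (x : ℝ) : ℝ := ∑' k : ℕ, φ k * x ^ k / (Nat.factorial k)

lemma summable_aux (C b : ℝ) (ψ : ℕ → ℝ)
    (hC : ∀ k, |ψ k| ≤ C * b ^ k) (x : ℝ) :
    Summable (fun k => ψ k * x ^ k / (Nat.factorial k)) := by
  apply Summable.of_norm
  refine Summable.of_nonneg_of_le (fun k => norm_nonneg _) (fun k => ?_)
    ((Real.summable_pow_div_factorial (b * |x|)).mul_left C)
  have hfac : (0:ℝ) < (Nat.factorial k : ℝ) := by positivity
  rw [Real.norm_eq_abs, abs_div, abs_of_pos hfac, abs_mul, abs_pow]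
  calc |ψ k| * |x| ^ k / (Nat.factorial k : ℝ)
      ≤ (C * b ^ k) * |x| ^ k / (Nat.factorial k : ℝ) := by
        gcongr
        exact hC k
    _ = C * ((b * |x|) ^ k / (Nat.factorial k : ℝ)) := by rw [mul_pow]; ring

lemma deriv_term_bound (C : ℝ) (ψ : ℕ → ℝ) (hC : ∀ k, |ψ k| ≤ C * 2 ^ k)
    (R : ℝ) (hR : 1 ≤ R) (y : ℝ) (hy : |y| ≤ R) (k : ℕ) :
    ‖ψ k * ((k : ℝ) * y ^ (k - 1)) / (Nat.factorial k)‖ ≤ C * (4 * R) ^ k / (Nat.factorial k) := by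
  have hC0 : 0 ≤ C := le_trans (abs_nonneg _) (le_of_le_of_eq (hC 0) (by norm_num))
  have hfac : (0:ℝ) < (Nat.factorial k : ℝ) := by positivity
  have hk2 : (k : ℝ) ≤ 2 ^ k := by exact_mod_cast (Nat.lt_two_pow_self (n := k)).le
  have hR0 : (0:ℝ) ≤ R := le_trans zero_le_one hR
  rw [Real.norm_eq_abs, abs_div, abs_of_pos hfac]
  gcongr
  calc |ψ k * ((k : ℝ) * y ^ (k - 1))| = |ψ k| * ((k:ℝ) * |y ^ (k-1)|) := by
        rw [abs_mul, abs_mul, Nat.abs_cast]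
    _ ≤ (C * 2 ^ k) * ((2:ℝ) ^ k * R ^ k) := by
        have h3 : |y ^ (k-1)| ≤ R ^ k := by
          rw [abs_pow]
          exact le_trans (pow_le_pow_left₀ (abs_nonneg _) hy _)
            (pow_le_pow_right₀ hR (Nat.sub_le k 1))
        have hknn : (0:ℝ) ≤ (k:ℝ) := Nat.cast_nonneg k
        gcongr
        exact hC k
    _ = C * (4 * R) ^ k := by rw [mul_pow]; ring_nf; rw [show (4:ℝ) = 2 * 2 by norm_num, mul_pow]; ring

lemma hasDerivAt_pSum (C : ℝ) (ψ : ℕ → ℝ) (hC : ∀ k, |ψ k| ≤ C * 2 ^ k) (x : ℝ) :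
    HasDerivAt (pSum ψ) (pSum (fun k => ψ (k + 1)) x) x := by
  have hC0 : 0 ≤ C := le_trans (abs_nonneg _) (le_of_le_of_eq (hC 0) (by norm_num))
  set R : ℝ := |x| + 1 with hRdef
  have hR : 1 ≤ R := by linarith [abs_nonneg x]
  have hxR : x ∈ Metric.ball (0:ℝ) R := by
    simp [Real.dist_eq, hRdef]
  have key : HasDerivAt (fun z => ∑' k : ℕ, ψ k * z ^ k / (Nat.factorial k))
      (∑' k : ℕ, ψ k * ((k : ℝ) * x ^ (k - 1)) / (Nat.factorial k)) x := by
    apply hasDerivAt_tsum_of_isPreconnected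
      (u := fun k => C * (4 * R) ^ k / (Nat.factorial k))
      ((Real.summable_pow_div_factorial (4 * R)).mul_left C |>.congr
        (fun k => by rw [mul_div_assoc]))
      Metric.isOpen_ball ((convex_ball (0:ℝ) R).isPreconnected)
      (fun k y _ => ((hasDerivAt_pow k y).const_mul (ψ k)).div_const _)
      (fun k y hy => deriv_term_bound C ψ hC R hR y (by
        have := mem_ball_zero_iff.mp hy
        rw [Real.norm_eq_abs] at this
        exact this.le) k)
      (Metric.mem_ball_self (by positivity))
      (summable_aux C 2 ψ hC 0) hxR
  have hsum : (∑' k : ℕ, ψ k * ((k : ℝ) * x ^ (k - 1)) / (Nat.factorial k))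
      = pSum (fun k => ψ (k + 1)) x := by
    have hsa : Summable (fun k : ℕ => ψ k * ((k : ℝ) * x ^ (k - 1)) / (Nat.factorial k)) := by
      apply Summable.of_norm
      refine Summable.of_nonneg_of_le (fun k => norm_nonneg _)
        (fun k => deriv_term_bound C ψ hC (|x| + 1) (by linarith [abs_nonneg x]) x (by linarith) k)
        (((Real.summable_pow_div_factorial (4 * (|x| + 1))).mul_left C).congr
          (fun k => by rw [mul_div_assoc]))
    rw [Summable.tsum_eq_zero_add hsa]
    simp only [Nat.cast_zero, zero_mul, mul_zero, zero_div, zero_add]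
    unfold pSum
    apply tsum_congr
    intro k
    have hk : ((k:ℝ) + 1) ≠ 0 := by positivity
    rw [Nat.add_sub_cancel, Nat.factorial_succ]
    push_cast
    field_simp
  rw [← hsum]
  exact key

noncomputable def pExp (ψ : ℕ → ℝ) (x : ℝ) : ℝ := Real.exp (-x) * pSum ψ x

lemma hasDerivAt_pExp (C : ℝ) (ψ : ℕ → ℝ) (hC : ∀ k, |ψ k| ≤ C * 2 ^ k) (x : ℝ) :
    HasDerivAt (pExp ψ) (pExp (fun k => ψ (k + 1) - ψ k) x) x := by
  have h1 : HasDerivAt (fun x : ℝ => Real.exp (-x)) (Real.exp (-x) * (-1)) x :=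
    (hasDerivAt_neg x).exp
  have h2 := hasDerivAt_pSum C ψ hC x
  have hC' : ∀ k, |ψ (k + 1)| ≤ (2 * C) * 2 ^ k := fun k =>
    (hC (k + 1)).trans (le_of_eq (by rw [pow_succ]; ring))
  have hps : pSum (fun k => ψ (k + 1) - ψ k) x
      = pSum (fun k => ψ (k + 1)) x - pSum ψ x := by
    unfold pSum
    rw [← Summable.tsum_sub (summable_aux (2 * C) 2 _ hC' x) (summable_aux C 2 ψ hC x)]
    exact tsum_congr fun k => by ring
  have h3 : HasDerivAt (fun y => Real.exp (-y) * pSum ψ y) _ x := h1.mul h2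
  convert h3 using 1
  · rfl
  unfold pExp
  rw [hps]
  ring

lemma pSum_zero (ψ : ℕ → ℝ) : pSum ψ 0 = ψ 0 := by
  unfold pSum
  rw [tsum_eq_single 0 (fun k hk => by simp [zero_pow hk])]
  simp

lemma pExp_zero (ψ : ℕ → ℝ) : pExp ψ 0 = ψ 0 := by
  unfold pExp
  rw [pSum_zero]
  simp

section main

variable {φ : ℕ → ℝ} (hφnn : ∀ k, 0 ≤ φ k) (hφ0 : φ 0 = 0) (hφ1 : φ 1 = 1)
    (hφmono : Monotone φ)
    (hφconc : ∀ k, φ (k + 2) - φ (k + 1) ≤ φ (k + 1) - φ k)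

include hφ0 hφ1 hφmono hφconc in
lemma step_le_one : ∀ k, φ (k + 1) - φ k ≤ 1 := by
  have h : ∀ k, φ (k + 1) - φ k ≤ φ 1 - φ 0 := by
    intro k
    induction k with
    | zero => exact le_refl _
    | succ n ih => exact le_trans (hφconc n) ih
  intro k
  have := h k
  rw [hφ0, hφ1] at this
  linarith

include hφnn hφ0 hφ1 hφmono hφconc in
lemma phi_bound : ∀ k, |φ k| ≤ 1 * 2 ^ k := by
  have hle : ∀ k, φ k ≤ k := by
    intro k
    induction k with
    | zero => simp [hφ0]
    | succ n ih =>
      have := step_le_one hφ0 hφ1 hφmono hφconc n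
      push_cast
      linarith
  intro k
  have h2 : (k : ℝ) ≤ 2 ^ k := by exact_mod_cast (Nat.lt_two_pow_self (n := k)).le
  rw [abs_of_nonneg (hφnn k), one_mul]
  exact (hle k).trans h2

include hφ0 hφ1 hφmono hφconc in
lemma psi_bound : ∀ k, |φ (k + 1) - φ k| ≤ 1 * 2 ^ k := by
  intro k
  have h1 : (1:ℝ) ≤ 2 ^ k := one_le_pow₀ (by norm_num)
  have h2 : 0 ≤ φ (k + 1) - φ k := sub_nonneg.mpr (hφmono (Nat.le_succ k))
  rw [abs_of_nonneg h2, one_mul]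
  exact (step_le_one hφ0 hφ1 hφmono hφconc k).trans h1

include hφ0 hφ1 hφmono hφconc in
lemma delta_bound : ∀ k, |(φ (k + 1 + 1) - φ (k + 1)) - (φ (k + 1) - φ k)| ≤ 1 * 2 ^ k := by
  intro k
  have h1 : (1:ℝ) ≤ 2 ^ k := one_le_pow₀ (by norm_num)
  have h2 : (φ (k + 2) - φ (k + 1)) - (φ (k + 1) - φ k) ≤ 0 := sub_nonpos.mpr (hφconc k)
  have h3 : 0 ≤ φ (k + 2) - φ (k + 1) := sub_nonneg.mpr (hφmono (Nat.le_succ (k+1)))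
  have h4 := step_le_one hφ0 hφ1 hφmono hφconc k
  rw [one_mul]
  have : |(φ (k + 1 + 1) - φ (k + 1)) - (φ (k + 1) - φ k)| ≤ 1 := by
    rw [abs_le]
    constructor <;> [skip; linarith [hφconc k]]
    have : φ (k+1+1) = φ (k+2) := by norm_num
    rw [this]
    linarith
  exact this.trans h1

include hφnn hφ0 hφ1 hφmono hφconc in
lemma concave_pExp : ConcaveOn ℝ (Set.Ici (0:ℝ)) (pExp φ) := by
  have hd1 : ∀ x : ℝ, HasDerivAt (pExp φ) (pExp (fun k => φ (k + 1) - φ k) x) x :=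
    hasDerivAt_pExp 1 φ (phi_bound hφnn hφ0 hφ1 hφmono hφconc)
  have hd2 : ∀ x : ℝ, HasDerivAt (pExp (fun k => φ (k + 1) - φ k))
      (pExp (fun k => (φ (k + 1 + 1) - φ (k + 1)) - (φ (k + 1) - φ k)) x) x :=
    hasDerivAt_pExp 1 _ (psi_bound hφ0 hφ1 hφmono hφconc)
  apply concaveOn_of_hasDerivWithinAt2_nonpos (convex_Ici 0)
    (f' := pExp (fun k => φ (k + 1) - φ k))
    (f'' := pExp (fun k => (φ (k + 1 + 1) - φ (k + 1)) - (φ (k + 1) - φ k)))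
  · exact fun x _ => (hd1 x).continuousAt.continuousWithinAt
  · exact fun x _ => (hd1 x).hasDerivWithinAt
  · exact fun x _ => (hd2 x).hasDerivWithinAt
  · intro x hx
    rw [interior_Ici] at hx
    have hx0 : (0:ℝ) ≤ x := (Set.mem_Ioi.mp hx).le
    unfold pExp
    have ht : (∑' k : ℕ, ((φ (k + 1 + 1) - φ (k + 1)) - (φ (k + 1) - φ k)) * x ^ k
        / (Nat.factorial k)) ≤ 0 := by
      apply tsum_nonpos
      intro k
      apply div_nonpos_of_nonpos_of_nonneg
      · exact mul_nonpos_of_nonpos_of_nonneg (sub_nonpos.mpr (hφconc k)) (pow_nonneg hx0 k)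
      · positivity
    have he := (Real.exp_pos (-x)).le
    exact mul_nonpos_of_nonneg_of_nonpos he ht

end main

lemma poiExp_eq (φ : ℕ → ℝ) (x : ℝ) : poiExp φ x = pExp φ x := by
  unfold poiExp pExp pSum
  rw [← tsum_mul_left]
  exact tsum_congr fun k => by ring

lemma pExp_nonneg (φ : ℕ → ℝ) (h : ∀ k, 0 ≤ φ k) (x : ℝ) (hx : 0 ≤ x) : 0 ≤ pExp φ x := by
  unfold pExp pSum
  apply mul_nonneg (Real.exp_pos _).le
  apply tsum_nonneg
  intro k
  have := h k
  positivity

lemma phiExt_natCast (φ : ℕ → ℝ) (n : ℕ) : phiExt φ (n : ℝ) = φ n := by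
  unfold phiExt
  rw [Nat.floor_natCast]
  simp

/-- For all `x ≥ 0`, `α_φ(x) ≥ min (α_φ(⌊x⌋), α_φ(⌈x⌉))`. -/
theorem stmt4 (φ : ℕ → ℝ) (hφnn : ∀ k, 0 ≤ φ k) (hφ0 : φ 0 = 0) (hφ1 : φ 1 = 1)
    (hφmono : Monotone φ)
    (hφconc : ∀ k, φ (k + 2) - φ (k + 1) ≤ φ (k + 1) - φ k) :
    ∀ x : ℝ, 0 ≤ x →
      min (alphaRatio φ (⌊x⌋₊ : ℝ)) (alphaRatio φ (⌈x⌉₊ : ℝ)) ≤ alphaRatio φ x := by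
  intro x hx
  by_cases hxn : ((⌊x⌋₊ : ℝ)) = x
  · rw [← hxn, Nat.floor_natCast, Nat.ceil_natCast, min_self]
  set n := ⌊x⌋₊ with hn
  have h1 : (n : ℝ) < x := lt_of_le_of_ne (Nat.floor_le hx) hxn
  have h2 : x < (n : ℝ) + 1 := by
    have := Nat.lt_floor_add_one x
    exact_mod_cast this
  have hceil : ⌈x⌉₊ = n + 1 := by
    apply le_antisymm
    · exact Nat.ceil_le.mpr (by push_cast; linarith)
    · exact Nat.lt_ceil.mpr h1
  -- abbreviations
  set g : ℝ → ℝ := pExp φ with hg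
  have hgconc := concave_pExp hφnn hφ0 hφ1 hφmono hφconc
  set lam : ℝ := (n : ℝ) + 1 - x with hlam
  set mu : ℝ := x - (n : ℝ) with hmu
  have hlam0 : 0 < lam := by simp only [hlam]; linarith
  have hmu0 : 0 < mu := by simp only [hmu]; linarith
  have hlm : lam + mu = 1 := by simp only [hlam, hmu]; ring
  have hxval : lam • ((n:ℝ)) + mu • (((n:ℝ) + 1)) = x := by
    simp only [smul_eq_mul, hlam, hmu]
    ring
  have hconcx : lam * g (n : ℝ) + mu * g ((n : ℝ) + 1) ≤ g x := by
    have hmem1 : (n:ℝ) ∈ Set.Ici (0:ℝ) := Set.mem_Ici.mpr (Nat.cast_nonneg n)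
    have hmem2 : ((n:ℝ) + 1) ∈ Set.Ici (0:ℝ) := Set.mem_Ici.mpr (by positivity)
    have := hgconc.2 hmem1 hmem2 hlam0.le hmu0.le hlm
    rw [hxval] at this
    simpa using this
  -- phiExt value
  have hP : phiExt φ x = lam * φ n + mu * φ (n + 1) := by
    unfold phiExt
    rw [← hn]
    have : lam = 1 - mu := by linarith
    rw [this, hmu]
    ring
  have hφn1 : (1:ℝ) ≤ φ (n + 1) := by
    rw [← hφ1]
    exact hφmono (by omega)
  have hPpos : 0 < phiExt φ x := by
    rw [hP]
    have := mul_nonneg hlam0.le (hφnn n)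
    nlinarith
  have hx0 : x ≠ 0 := ne_of_gt (lt_of_le_of_lt (Nat.cast_nonneg n) h1)
  have hαx : alphaRatio φ x = g x / phiExt φ x := by
    rw [alphaRatio, if_neg hx0, poiExp_eq]
  -- alphaRatio at integers
  have hαint : ∀ m : ℕ, alphaRatio φ (m : ℝ) * φ m = g (m : ℝ) := by
    intro m
    rcases Nat.eq_zero_or_pos m with hm | hm
    · subst hm
      rw [Nat.cast_zero, hg, pExp_zero, hφ0, mul_zero]
    · have hm0 : ((m:ℝ)) ≠ 0 := Nat.cast_ne_zero.mpr hm.ne'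
      have hφm : (0:ℝ) < φ m := by
        have : (1:ℝ) ≤ φ m := by rw [← hφ1]; exact hφmono hm
        linarith
      rw [alphaRatio, if_neg hm0, phiExt_natCast, poiExp_eq, ← hg, div_mul_cancel₀ _ hφm.ne']
  set m := min (alphaRatio φ (n : ℝ)) (alphaRatio φ ((n + 1 : ℕ) : ℝ)) with hmdef
  have key : m * phiExt φ x ≤ g x := by
    have c1 : m * φ n ≤ g (n : ℝ) := by
      rw [← hαint n]
      exact mul_le_mul_of_nonneg_right (min_le_left _ _) (hφnn n)
    have c2 : m * φ (n + 1) ≤ g ((n : ℝ) + 1) := by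
      have hle2 : m ≤ alphaRatio φ (((n + 1 : ℕ)) : ℝ) := by
        rw [hmdef]; exact min_le_right _ _
      have := mul_le_mul_of_nonneg_right hle2 (hφnn (n + 1))
      rw [hαint (n + 1)] at this
      push_cast at this ⊢
      exact this
    calc m * phiExt φ x = lam * (m * φ n) + mu * (m * φ (n + 1)) := by rw [hP]; ring
      _ ≤ lam * g (n : ℝ) + mu * g ((n : ℝ) + 1) := by
          exact add_le_add (mul_le_mul_of_nonneg_left c1 hlam0.le)
            (mul_le_mul_of_nonneg_left c2 hmu0.le)
      _ ≤ g x := hconcx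
  rw [hαx, le_div_iff₀ hPpos, hceil]
  push_cast
  push_cast at hmdef
  rw [← hmdef]
  exact key
end

section
/- Let φ : ℕ → ℝ≥0 be nondecreasing, concave, normalized, extended piecewise linearly. Then inf_{x ∈ ℝ≥0} E[φ(Poi(x))]/φ(x) = min_{x ∈ ℕ, x ≥ 1} E[φ(Poi(x))]/φ(x); in particular the infimum over positive integers is attained. -/
set_option maxHeartbeats 1000000

open Real Finset


lemma sumA (x : ℝ) : Summable (fun k : ℕ => ((k : ℝ) + 1) * x ^ k / (Nat.factorial k)) := by
  rw [← summable_nat_add_iff 1]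
  apply Summable.of_norm_bounded (g := fun k => (2 * |x|) * (|x| ^ k / (Nat.factorial k)))
    (((Real.summable_pow_div_factorial |x|)).mul_left _)
  intro k
  have h1 : (0:ℝ) < (Nat.factorial k) := by positivity
  have hX : (0:ℝ) ≤ |x| ^ k := by positivity
  rw [norm_div, norm_mul]
  simp only [Nat.cast_add, Nat.cast_one, Real.norm_eq_abs, abs_pow]
  have e1 : |((k:ℝ) + 1 + 1)| = (k:ℝ) + 2 := by
    rw [abs_of_nonneg] <;> [ring; positivity]
  have e2 : |((Nat.factorial (k+1) : ℕ) : ℝ)| = ((k:ℝ)+1) * (Nat.factorial k) := by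
    rw [abs_of_nonneg (by positivity), Nat.factorial_succ]; push_cast; ring
  rw [e1, e2, pow_succ]
  have hax : 0 ≤ |x| := abs_nonneg x
  have hr : 2 * |x| * (|x| ^ k / ↑(Nat.factorial k)) =
      (2 * ((k:ℝ)+1)) * (|x| ^ k * |x|) / (((k:ℝ)+1) * ↑(Nat.factorial k)) := by
    field_simp
  rw [hr]
  gcongr
  linarith

lemma summable_poi {ψ : ℕ → ℝ} {C : ℝ} (h : ∀ k, |ψ k| ≤ C * (k + 1)) (x : ℝ) :
    Summable (fun k : ℕ => ψ k * x ^ k / (Nat.factorial k)) := by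
  apply Summable.of_norm_bounded (g := fun k : ℕ => C * (((k:ℝ) + 1) * |x| ^ k / (Nat.factorial k)))
    ((sumA |x|).mul_left _)
  intro k
  have h1 : (0:ℝ) < (Nat.factorial k) := by positivity
  rw [norm_div, norm_mul]
  simp only [Real.norm_eq_abs, abs_pow, abs_of_nonneg h1.le, Nat.abs_cast]
  have hX : (0:ℝ) ≤ |x| ^ k := by positivity
  have := h k
  have h2 : |ψ k| * |x| ^ k ≤ C * ((↑k + 1) * |x| ^ k) := by nlinarith [abs_nonneg (ψ k)]
  calc |ψ k| * |x| ^ k / ↑(Nat.factorial k) ≤ C * ((↑k + 1) * |x| ^ k) / ↑(Nat.factorial k) := by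
        gcongr
    _ = C * ((↑k + 1) * |x| ^ k / ↑(Nat.factorial k)) := by ring

noncomputable def pS (ψ : ℕ → ℝ) (x : ℝ) : ℝ := ∑' k : ℕ, ψ k * x ^ k / (Nat.factorial k)

lemma poiExp_eq_pS (ψ : ℕ → ℝ) (x : ℝ) : poiExp ψ x = Real.exp (-x) * pS ψ x := by
  rw [poiExp, pS, ← tsum_mul_left]
  apply tsum_congr
  intro k
  ring

lemma sumA2 (C x : ℝ) : Summable (fun k : ℕ => C * ((k : ℝ) + 1)^2 * x ^ k / (Nat.factorial k)) := by
  rw [← summable_nat_add_iff 1]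
  apply Summable.of_norm_bounded (g := fun k : ℕ => (4 * |C| * |x|) * (((k:ℝ) + 1) * |x| ^ k / (Nat.factorial k)))
    ((sumA |x|).mul_left _)
  intro k
  have h1 : (0:ℝ) < (Nat.factorial k) := by positivity
  have hX : (0:ℝ) ≤ |x| ^ k := by positivity
  have e2 : |((Nat.factorial (k+1) : ℕ) : ℝ)| = ((k:ℝ)+1) * (Nat.factorial k) := by
    rw [abs_of_nonneg (by positivity), Nat.factorial_succ]; push_cast; ring
  rw [norm_div, norm_mul, norm_mul]
  simp only [Real.norm_eq_abs, abs_pow, sq_abs]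
  rw [e2]
  push_cast
  have e3 : ((k:ℝ) + 1 + 1) = ((k:ℝ) + 2) := by ring
  rw [e3, pow_succ]
  have hr : 4 * |C| * |x| * (((k:ℝ)+1) * |x| ^ k / ↑(Nat.factorial k)) =
      (|C| * (4*((k:ℝ)+1)^2)) * (|x| ^ k * |x|) / (((k:ℝ)+1) * ↑(Nat.factorial k)) := by
    field_simp
  rw [hr]
  have hC : (0:ℝ) ≤ |C| := abs_nonneg C
  calc |C| * ((k:ℝ)+2)^2 * (|x| ^ k * |x|) / (((k:ℝ)+1) * ↑(Nat.factorial k))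
      ≤ (|C| * (4*((k:ℝ)+1)^2)) * (|x| ^ k * |x|) / (((k:ℝ)+1) * ↑(Nat.factorial k)) := by
        gcongr ?_ * _ / _
        have h4 : ((k:ℝ)+2)^2 ≤ 4*((k:ℝ)+1)^2 := by nlinarith [sq_nonneg ((k:ℝ)), Nat.cast_nonneg (α := ℝ) k]
        exact mul_le_mul_of_nonneg_left h4 hC
    _ = _ := rfl


lemma pS_hasDerivAt {ψ : ℕ → ℝ} {C : ℝ} (h : ∀ k, |ψ k| ≤ C * (k + 1)) (x : ℝ) :
    HasDerivAt (pS ψ) (pS (fun k => ψ (k + 1)) x) x := by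
  have hC : 0 ≤ C := by nlinarith [h 0, abs_nonneg (ψ 0)]
  set R : ℝ := |x| + 1 with hRdef
  have hR0 : (0:ℝ) < R := by positivity
  have hR1 : (1:ℝ) ≤ R := by rw [hRdef]; linarith [abs_nonneg x]
  have hu : Summable (fun k : ℕ => C * ((k:ℝ) + 1)^2 * R ^ k / (Nat.factorial k)) := sumA2 C R
  have hg : ∀ (k : ℕ), ∀ y ∈ Metric.ball (0:ℝ) R,
      HasDerivAt (fun z => ψ k * z ^ k / (Nat.factorial k))
        (ψ k * ((k:ℝ) * y ^ (k - 1)) / (Nat.factorial k)) y := by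
    intro k y _
    exact ((hasDerivAt_pow k y).const_mul (ψ k)).div_const _
  have hg' : ∀ (k : ℕ), ∀ y ∈ Metric.ball (0:ℝ) R,
      ‖ψ k * ((k:ℝ) * y ^ (k - 1)) / (Nat.factorial k)‖ ≤ C * ((k:ℝ) + 1)^2 * R ^ k / (Nat.factorial k) := by
    intro k y hy
    rw [mem_ball_zero_iff, Real.norm_eq_abs] at hy
    match k with
    | 0 => simpa using by positivity
    | (j+1) =>
      have h1 : (0:ℝ) < (Nat.factorial j) := by positivity
      have h2 : (0:ℝ) < (Nat.factorial (j+1)) := by positivity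
      rw [norm_div, norm_mul, norm_mul]
      simp only [Real.norm_eq_abs, abs_pow, Nat.abs_cast, Nat.add_sub_cancel]
      have hyR : |y| ^ j ≤ R ^ (j+1) := by
        calc |y| ^ j ≤ R ^ j := pow_le_pow_left₀ (abs_nonneg y) hy.le j
          _ ≤ R ^ (j+1) := pow_le_pow_right₀ hR1 (Nat.le_succ j)
      have hψ : |ψ (j+1)| ≤ C * ((j:ℝ) + 2) := by
        have := h (j+1); push_cast at this; linarith
      calc |ψ (j+1)| * ((((j+1):ℕ):ℝ) * |y| ^ j) / ((Nat.factorial (j+1) : ℕ) : ℝ)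
          ≤ (C * ((j:ℝ)+2)) * (((j:ℝ)+2) * R ^ (j+1)) / ((Nat.factorial (j+1) : ℕ) : ℝ) := by
            gcongr
            push_cast; linarith
        _ = C * ((((j+1):ℕ):ℝ) + 1)^2 * R ^ (j+1) / ((Nat.factorial (j+1) : ℕ) : ℝ) := by
            push_cast; ring
  have hx : x ∈ Metric.ball (0:ℝ) R := by
    rw [mem_ball_zero_iff, Real.norm_eq_abs]; simp [hRdef]
  have key := hasDerivAt_tsum_of_isPreconnected hu Metric.isOpen_ball
    ((convex_ball (0:ℝ) R).isPreconnected) hg hg' hx (summable_poi h x) hx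
  have hsum' : Summable (fun k => ψ k * ((k:ℝ) * x ^ (k - 1)) / (Nat.factorial k)) := by
    apply Summable.of_norm_bounded hu (fun k => hg' k x hx)
  have hval : (∑' k : ℕ, ψ k * ((k:ℝ) * x ^ (k - 1)) / (Nat.factorial k)) = pS (fun k => ψ (k + 1)) x := by
    rw [Summable.tsum_eq_zero_add hsum', pS]
    simp only [Nat.cast_zero, zero_mul, mul_zero, zero_div, zero_add, Nat.add_sub_cancel]
    apply tsum_congr
    intro j
    have h1 : (0:ℝ) < (Nat.factorial j) := by positivity
    rw [Nat.factorial_succ]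
    push_cast
    field_simp
  rw [hval] at key
  exact key

lemma poiExp_hasDerivAt {ψ : ℕ → ℝ} {C : ℝ} (h : ∀ k, |ψ k| ≤ C * (k + 1)) (x : ℝ) :
    HasDerivAt (poiExp ψ) (poiExp (fun k => ψ (k + 1) - ψ k) x) x := by
  have hshift : ∀ k : ℕ, |ψ (k+1)| ≤ (2*C) * ((k:ℝ) + 1) := by
    intro k
    have := h (k+1)
    have hC : 0 ≤ C := by nlinarith [h 0, abs_nonneg (ψ 0)]
    push_cast at this
    nlinarith [Nat.cast_nonneg (α := ℝ) k]
  have hD : HasDerivAt (fun y => Real.exp (-y) * pS ψ y)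
      (-Real.exp (-x) * pS ψ x + Real.exp (-x) * pS (fun k => ψ (k + 1)) x) x := by
    have he : HasDerivAt (fun y : ℝ => Real.exp (-y)) (-Real.exp (-x)) x := by
      simpa [Function.comp_def] using (Real.hasDerivAt_exp (-x)).comp x (hasDerivAt_neg x)
    exact he.mul (pS_hasDerivAt h x)
  have hfun : poiExp ψ = fun y => Real.exp (-y) * pS ψ y := funext (poiExp_eq_pS ψ)
  rw [hfun]
  convert hD using 1
  rw [poiExp_eq_pS]
  have hsub : pS (fun k => ψ (k+1) - ψ k) x = pS (fun k => ψ (k + 1)) x - pS ψ x := by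
    rw [pS, pS, pS, ← Summable.tsum_sub (summable_poi hshift x) (summable_poi h x)]
    apply tsum_congr
    intro k
    ring
  rw [hsub]
  ring

lemma summable_poi2 {ψ : ℕ → ℝ} {C : ℝ} (h : ∀ k, |ψ k| ≤ C * ((k:ℝ) + 1)^2) (x : ℝ) :
    Summable (fun k : ℕ => ψ k * x ^ k / (Nat.factorial k)) := by
  apply Summable.of_norm_bounded (g := fun k : ℕ => C * ((k:ℝ) + 1)^2 * |x| ^ k / (Nat.factorial k))
    (sumA2 C |x|)
  intro k
  have h1 : (0:ℝ) < (Nat.factorial k) := by positivity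
  have hX : (0:ℝ) ≤ |x| ^ k := by positivity
  rw [norm_div, norm_mul]
  simp only [Real.norm_eq_abs, abs_pow, Nat.abs_cast]
  gcongr
  exact h k

lemma tsum_exp (x : ℝ) : (∑' k : ℕ, x ^ k / (Nat.factorial k)) = Real.exp x := by
  rw [Real.exp_eq_exp_ℝ, NormedSpace.exp_eq_tsum_div]

lemma summable_id_poi (x : ℝ) : Summable (fun k : ℕ => (k:ℝ) * x ^ k / (Nat.factorial k)) := by
  apply summable_poi (C := 1) (fun k => ?_)
  rw [Nat.abs_cast]; push_cast; linarith

lemma summable_sq_poi (x : ℝ) : Summable (fun k : ℕ => ((k:ℝ))^2 * x ^ k / (Nat.factorial k)) := by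
  apply summable_poi2 (C := 1) (fun k => ?_)
  rw [abs_of_nonneg (by positivity)]
  nlinarith [Nat.cast_nonneg (α := ℝ) k]

lemma tsum_m1 (x : ℝ) : (∑' k : ℕ, (k:ℝ) * x ^ k / (Nat.factorial k)) = x * Real.exp x := by
  rw [Summable.tsum_eq_zero_add (summable_id_poi x)]
  simp only [Nat.cast_zero, zero_mul, zero_div, zero_add]
  have : (fun j : ℕ => ((j+1 : ℕ):ℝ) * x ^ (j+1) / (Nat.factorial (j+1))) =
      (fun j : ℕ => x * (x ^ j / (Nat.factorial j))) := by
    funext j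
    have h1 : (0:ℝ) < (Nat.factorial j) := by positivity
    rw [Nat.factorial_succ]
    push_cast
    field_simp
    ring
  rw [this, tsum_mul_left, tsum_exp]

lemma tsum_m2 (x : ℝ) : (∑' k : ℕ, ((k:ℝ))^2 * x ^ k / (Nat.factorial k)) = (x^2 + x) * Real.exp x := by
  rw [Summable.tsum_eq_zero_add (summable_sq_poi x)]
  simp only [Nat.cast_zero, zero_pow, zero_mul, zero_div, zero_add, ne_eq, OfNat.ofNat_ne_zero,
    not_false_eq_true]
  have : (fun j : ℕ => (((j+1 : ℕ):ℝ))^2 * x ^ (j+1) / (Nat.factorial (j+1))) =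
      (fun j : ℕ => x * ((j:ℝ) * x ^ j / (Nat.factorial j)) + x * (x ^ j / (Nat.factorial j))) := by
    funext j
    have h1 : (0:ℝ) < (Nat.factorial j) := by positivity
    rw [Nat.factorial_succ]
    push_cast
    field_simp
    ring
  rw [this, Summable.tsum_add ((summable_id_poi x).mul_left x) ((Real.summable_pow_div_factorial x).mul_left x),
    tsum_mul_left, tsum_mul_left, tsum_m1, tsum_exp]
  ring

section Phi

variable {φ : ℕ → ℝ} (hφnn : ∀ k, 0 ≤ φ k) (hφ0 : φ 0 = 0) (hφ1 : φ 1 = 1)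
  (hφmono : Monotone φ)
  (hφconc : ∀ k, φ (k + 2) - φ (k + 1) ≤ φ (k + 1) - φ k)

include hφnn hφ0 hφ1 hφmono hφconc

lemma d_anti : Antitone (fun k => φ (k+1) - φ k) :=
  antitone_nat_of_succ_le (fun n => hφconc n)

lemma d_le_one : ∀ k, φ (k+1) - φ k ≤ 1 := by
  intro k
  have := d_anti hφnn hφ0 hφ1 hφmono hφconc (Nat.zero_le k)
  simpa [hφ0, hφ1] using this

lemma d_nonneg : ∀ k, 0 ≤ φ (k+1) - φ k := fun k => sub_nonneg.2 (hφmono (Nat.le_succ k))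

lemma phi_le : ∀ k, φ k ≤ k := by
  intro k
  have htel : ∑ j ∈ Finset.range k, (φ (j+1) - φ j) = φ k - φ 0 := Finset.sum_range_sub φ k
  have : φ k - φ 0 ≤ ∑ j ∈ Finset.range k, (1:ℝ) := by
    rw [← htel]
    exact Finset.sum_le_sum (fun j _ => d_le_one hφnn hφ0 hφ1 hφmono hφconc j)
  simp only [Finset.sum_const, Finset.card_range, nsmul_eq_mul, mul_one] at this
  rw [hφ0] at this
  linarith

lemma phi_bdd : ∀ k, |φ k| ≤ 1 * ((k:ℝ) + 1) := by
  intro k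
  rw [abs_of_nonneg (hφnn k), one_mul]
  have := phi_le hφnn hφ0 hφ1 hφmono hφconc k
  linarith

lemma d_bdd : ∀ k, |φ (k+1) - φ k| ≤ 1 * ((k:ℝ) + 1) := by
  intro k
  rw [abs_of_nonneg (d_nonneg hφnn hφ0 hφ1 hφmono hφconc k), one_mul]
  have := d_le_one hφnn hφ0 hφ1 hφmono hφconc k
  have : (0:ℝ) ≤ k := Nat.cast_nonneg k
  linarith [d_le_one hφnn hφ0 hφ1 hφmono hφconc k]

lemma poiExp_concaveOn : ConcaveOn ℝ (Set.Ici (0:ℝ)) (poiExp φ) := by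
  set d : ℕ → ℝ := fun k => φ (k+1) - φ k with hd_def
  have hD1 : ∀ x, HasDerivAt (poiExp φ) (poiExp d x) x :=
    fun x => poiExp_hasDerivAt (phi_bdd hφnn hφ0 hφ1 hφmono hφconc) x
  have hD2 : ∀ x, HasDerivAt (poiExp d) (poiExp (fun k => d (k+1) - d k) x) x :=
    fun x => poiExp_hasDerivAt (d_bdd hφnn hφ0 hφ1 hφmono hφconc) x
  have hsec : ∀ x : ℝ, 0 ≤ x → poiExp (fun k => d (k+1) - d k) x ≤ 0 := by
    intro x hx
    rw [poiExp]
    apply tsum_nonpos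
    intro k
    apply mul_nonpos_of_nonneg_of_nonpos
    · positivity
    · simp only [hd_def]
      have := hφconc k
      linarith
  have hanti : AntitoneOn (poiExp d) (Set.Ici (0:ℝ)) := by
    apply antitoneOn_of_deriv_nonpos (convex_Ici 0)
    · exact (continuous_iff_continuousAt.mpr (fun x => (hD2 x).continuousAt)).continuousOn
    · exact fun x _ => ((hD2 x).differentiableAt).differentiableWithinAt
    · intro x hx
      rw [interior_Ici] at hx
      rw [(hD2 x).deriv]
      exact hsec x (le_of_lt hx)
  apply AntitoneOn.concaveOn_of_deriv (convex_Ici 0)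
  · exact (continuous_iff_continuousAt.mpr (fun x => (hD1 x).continuousAt)).continuousOn
  · exact fun x _ => ((hD1 x).differentiableAt).differentiableWithinAt
  · have : deriv (poiExp φ) = poiExp d := funext (fun x => (hD1 x).deriv)
    rw [this]
    exact hanti.mono interior_subset

end Phi

section Phi2

variable {φ : ℕ → ℝ} (hφnn : ∀ k, 0 ≤ φ k) (hφ0 : φ 0 = 0) (hφ1 : φ 1 = 1)
  (hφmono : Monotone φ)
  (hφconc : ∀ k, φ (k + 2) - φ (k + 1) ≤ φ (k + 1) - φ k)

include hφnn hφ0 hφ1 hφmono hφconc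

lemma phi_le_line (n : ℕ) (k : ℕ) :
    φ k ≤ φ n + ((k:ℝ) - n) * (φ (n+1) - φ n) := by
  have hanti := d_anti hφnn hφ0 hφ1 hφmono hφconc
  rcases le_or_gt n k with hnk | hkn
  · have htel : ∑ j ∈ Finset.Ico n k, (φ (j+1) - φ j) = φ k - φ n := by
      rw [Finset.sum_Ico_eq_sub _ hnk, Finset.sum_range_sub φ, Finset.sum_range_sub φ]
      ring
    have hbound : φ k - φ n ≤ ((k - n : ℕ) : ℝ) * (φ (n+1) - φ n) := by
      rw [← htel]
      calc ∑ j ∈ Finset.Ico n k, (φ (j+1) - φ j)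
          ≤ ∑ j ∈ Finset.Ico n k, (φ (n+1) - φ n) :=
            Finset.sum_le_sum (fun j hj => hanti (Finset.mem_Ico.mp hj).1)
        _ = ((k - n : ℕ) : ℝ) * (φ (n+1) - φ n) := by
            rw [Finset.sum_const, Nat.card_Ico, nsmul_eq_mul]
    rw [Nat.cast_sub hnk] at hbound
    linarith
  · have htel : ∑ j ∈ Finset.Ico k n, (φ (j+1) - φ j) = φ n - φ k := by
      rw [Finset.sum_Ico_eq_sub _ hkn.le, Finset.sum_range_sub φ, Finset.sum_range_sub φ]
      ring
    have hbound : ((n - k : ℕ) : ℝ) * (φ (n+1) - φ n) ≤ φ n - φ k := by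
      rw [← htel]
      calc ((n - k : ℕ) : ℝ) * (φ (n+1) - φ n)
          = ∑ j ∈ Finset.Ico k n, (φ (n+1) - φ n) := by
            rw [Finset.sum_const, Nat.card_Ico, nsmul_eq_mul]
        _ ≤ ∑ j ∈ Finset.Ico k n, (φ (j+1) - φ j) :=
            Finset.sum_le_sum (fun j hj => hanti (le_of_lt (Finset.mem_Ico.mp hj).2))
    rw [Nat.cast_sub hkn.le] at hbound
    linarith

lemma poiExp_le_phiExt (x : ℝ) (hx : 0 ≤ x) : poiExp φ x ≤ phiExt φ x := by
  set n : ℕ := ⌊x⌋₊ with hn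
  set dn : ℝ := φ (n+1) - φ n with hdn
  have hp : ∀ k : ℕ, 0 ≤ Real.exp (-x) * x ^ k / (Nat.factorial k) :=
    fun k => div_nonneg (mul_nonneg (Real.exp_pos _).le (pow_nonneg hx k)) (Nat.cast_nonneg _)
  have hsum1 : Summable (fun k : ℕ => Real.exp (-x) * x ^ k / (Nat.factorial k) * φ k) := by
    apply Summable.congr ((summable_poi (phi_bdd hφnn hφ0 hφ1 hφmono hφconc) x).mul_left (Real.exp (-x)))
    intro k
    ring
  have hsum2 : Summable (fun k : ℕ =>
      (φ n - n * dn) * (Real.exp (-x) * (x ^ k / (Nat.factorial k)))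
      + (dn * Real.exp (-x)) * ((k:ℝ) * x ^ k / (Nat.factorial k))) :=
    (((Real.summable_pow_div_factorial x).mul_left _).mul_left _).add
      ((summable_id_poi x).mul_left _)
  have hle : poiExp φ x ≤ ∑' k : ℕ, ((φ n - n * dn) * (Real.exp (-x) * (x ^ k / (Nat.factorial k)))
      + (dn * Real.exp (-x)) * ((k:ℝ) * x ^ k / (Nat.factorial k))) := by
    rw [poiExp]
    apply hsum1.tsum_le_tsum _ hsum2
    intro k
    have hline := phi_le_line hφnn hφ0 hφ1 hφmono hφconc n k
    calc Real.exp (-x) * x ^ k / (Nat.factorial k) * φ k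
        ≤ Real.exp (-x) * x ^ k / (Nat.factorial k) * (φ n + ((k:ℝ) - n) * dn) :=
          mul_le_mul_of_nonneg_left hline (hp k)
      _ = (φ n - n * dn) * (Real.exp (-x) * (x ^ k / (Nat.factorial k)))
          + (dn * Real.exp (-x)) * ((k:ℝ) * x ^ k / (Nat.factorial k)) := by ring
  have h1 : Real.exp (-x) * Real.exp x = 1 := by rw [← Real.exp_add]; simp
  have hval : ∑' k : ℕ, ((φ n - n * dn) * (Real.exp (-x) * (x ^ k / (Nat.factorial k)))
      + (dn * Real.exp (-x)) * ((k:ℝ) * x ^ k / (Nat.factorial k)))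
      = φ n + (x - n) * dn := by
    rw [Summable.tsum_add (((Real.summable_pow_div_factorial x).mul_left _).mul_left _)
      ((summable_id_poi x).mul_left _), tsum_mul_left, tsum_mul_left, tsum_mul_left,
      tsum_exp, tsum_m1]
    linear_combination (φ n - (n:ℝ) * dn + dn * x) * h1
  rw [hval] at hle
  rw [phiExt]
  exact hle

end Phi2

section Phi3

variable {φ : ℕ → ℝ} (hφnn : ∀ k, 0 ≤ φ k) (hφ0 : φ 0 = 0) (hφ1 : φ 1 = 1)
  (hφmono : Monotone φ)
  (hφconc : ∀ k, φ (k + 2) - φ (k + 1) ≤ φ (k + 1) - φ k)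

include hφnn hφ0 hφ1 hφmono hφconc

lemma phi_superhom {k n : ℕ} (hkn : k ≤ n) : (k:ℝ) * φ n ≤ (n:ℝ) * φ k := by
  have hanti := d_anti hφnn hφ0 hφ1 hφmono hφconc
  rcases Nat.eq_zero_or_pos k with hk0 | hk1
  · subst hk0
    simp only [Nat.cast_zero, zero_mul]
    exact mul_nonneg (Nat.cast_nonneg n) (hφnn 0)
  · -- k d k ≤ φ k
    have h1 : (k:ℝ) * (φ (k+1) - φ k) ≤ φ k := by
      have htel : ∑ j ∈ Finset.range k, (φ (j+1) - φ j) = φ k := by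
        rw [Finset.sum_range_sub φ, hφ0, sub_zero]
      calc (k:ℝ) * (φ (k+1) - φ k)
          = ∑ j ∈ Finset.range k, (φ (k+1) - φ k) := by
            rw [Finset.sum_const, Finset.card_range, nsmul_eq_mul]
        _ ≤ ∑ j ∈ Finset.range k, (φ (j+1) - φ j) :=
            Finset.sum_le_sum (fun j hj => hanti (le_of_lt (Finset.mem_range.mp hj)))
        _ = φ k := htel
    -- φ n - φ k ≤ (n - k) d k
    have h2 : φ n - φ k ≤ ((n:ℝ) - k) * (φ (k+1) - φ k) := by
      have := phi_le_line hφnn hφ0 hφ1 hφmono hφconc k n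
      linarith
    have hdk : 0 ≤ φ (k+1) - φ k := d_nonneg hφnn hφ0 hφ1 hφmono hφconc k
    have hkn' : (k:ℝ) ≤ n := Nat.cast_le.mpr hkn
    have hk1' : (1:ℝ) ≤ k := by exact_mod_cast hk1
    nlinarith [hφnn k, hφnn n]

end Phi3

section Phi4

variable {φ : ℕ → ℝ} (hφnn : ∀ k, 0 ≤ φ k) (hφ0 : φ 0 = 0) (hφ1 : φ 1 = 1)
  (hφmono : Monotone φ)
  (hφconc : ∀ k, φ (k + 2) - φ (k + 1) ≤ φ (k + 1) - φ k)

include hφnn hφ0 hφ1 hφmono hφconc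

lemma poiExp_tail (n : ℕ) (hn : 1 ≤ n) (a : ℝ) (ha : 0 < a) :
    (φ n / n) * ((n:ℝ) - (n:ℝ)/(2*a) - a/2) ≤ poiExp φ (n:ℝ) := by
  set x : ℝ := (n:ℝ) with hxdef
  have hx : (0:ℝ) ≤ x := Nat.cast_nonneg n
  have hnpos : (0:ℝ) < (n:ℝ) := by exact_mod_cast hn
  set c : ℝ := φ n / n with hc
  have hcnn : 0 ≤ c := div_nonneg (hφnn n) hnpos.le
  have hp : ∀ k : ℕ, 0 ≤ Real.exp (-x) * x ^ k / (Nat.factorial k) :=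
    fun k => div_nonneg (mul_nonneg (Real.exp_pos _).le (pow_nonneg hx k)) (Nat.cast_nonneg _)
  -- pointwise lower bound
  have hpoint : ∀ k : ℕ, c * ((n:ℝ) - ((k:ℝ)-n)^2/(2*a) - a/2) ≤ φ k := by
    intro k
    have hmin : c * ((n:ℝ) - ((k:ℝ)-n)^2/(2*a) - a/2) ≤ c * (min (k:ℝ) (n:ℝ)) := by
      apply mul_le_mul_of_nonneg_left _ hcnn
      rcases le_total (n:ℕ) k with hnk | hkn
      · have : min ((k:ℕ):ℝ) ((n:ℕ):ℝ) = (n:ℝ) := min_eq_right (Nat.cast_le.mpr hnk)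
        rw [this]
        have : (0:ℝ) ≤ ((k:ℝ)-n)^2/(2*a) := by positivity
        linarith
      · have : min ((k:ℕ):ℝ) ((n:ℕ):ℝ) = (k:ℝ) := min_eq_left (Nat.cast_le.mpr hkn)
        rw [this]
        have h2a : (0:ℝ) < 2*a := by linarith
        have key : ((n:ℝ) - k - a/2) * (2*a) ≤ ((k:ℝ)-n)^2 := by nlinarith [sq_nonneg ((n:ℝ)-k-a)]
        have := (le_div_iff₀ h2a).mpr key
        linarith
    have hmin2 : c * (min (k:ℝ) (n:ℝ)) ≤ φ k := by
      rcases le_total (n:ℕ) k with hnk | hkn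
      · rw [min_eq_right (Nat.cast_le.mpr hnk)]
        have : c * (n:ℝ) = φ n := by rw [hc, div_mul_cancel₀ _ hnpos.ne']
        rw [this]
        exact hφmono hnk
      · rw [min_eq_left (Nat.cast_le.mpr hkn)]
        have := phi_superhom hφnn hφ0 hφ1 hφmono hφconc hkn
        rw [hc]
        rw [div_mul_eq_mul_div, div_le_iff₀ hnpos]
        nlinarith
    linarith
  -- sum it up
  set C1 : ℝ := c * ((n:ℝ) - a/2) - c * (n:ℝ)^2/(2*a) with hC1
  set C2 : ℝ := 2 * c * (n:ℝ)/(2*a) with hC2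
  set C3 : ℝ := -c/(2*a) with hC3
  have hsumφ : Summable (fun k : ℕ => Real.exp (-x) * x ^ k / (Nat.factorial k) * φ k) := by
    apply Summable.congr ((summable_poi (phi_bdd hφnn hφ0 hφ1 hφmono hφconc) x).mul_left (Real.exp (-x)))
    intro k
    ring
  have hs1 : Summable (fun k : ℕ => C1 * (Real.exp (-x) * (x ^ k / (Nat.factorial k)))) :=
    ((Real.summable_pow_div_factorial x).mul_left _).mul_left _
  have hs2 : Summable (fun k : ℕ => C2 * (Real.exp (-x) * ((k:ℝ) * x ^ k / (Nat.factorial k)))) :=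
    ((summable_id_poi x).mul_left _).mul_left _
  have hs3 : Summable (fun k : ℕ => C3 * (Real.exp (-x) * (((k:ℝ))^2 * x ^ k / (Nat.factorial k)))) :=
    ((summable_sq_poi x).mul_left _).mul_left _
  have hle : (∑' k : ℕ, (C1 * (Real.exp (-x) * (x ^ k / (Nat.factorial k)))
      + (C2 * (Real.exp (-x) * ((k:ℝ) * x ^ k / (Nat.factorial k)))
      + C3 * (Real.exp (-x) * (((k:ℝ))^2 * x ^ k / (Nat.factorial k))))))
      ≤ poiExp φ x := by
    rw [poiExp]
    apply (hs1.add (hs2.add hs3)).tsum_le_tsum _ hsumφ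
    intro k
    calc C1 * (Real.exp (-x) * (x ^ k / (Nat.factorial k)))
        + (C2 * (Real.exp (-x) * ((k:ℝ) * x ^ k / (Nat.factorial k)))
        + C3 * (Real.exp (-x) * (((k:ℝ))^2 * x ^ k / (Nat.factorial k))))
        = (Real.exp (-x) * x ^ k / (Nat.factorial k)) * (c * ((n:ℝ) - ((k:ℝ)-n)^2/(2*a) - a/2)) := by
          rw [hC1, hC2, hC3]
          ring
      _ ≤ Real.exp (-x) * x ^ k / (Nat.factorial k) * φ k :=
          mul_le_mul_of_nonneg_left (hpoint k) (hp k)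
  have h1 : Real.exp (-x) * Real.exp x = 1 := by rw [← Real.exp_add]; simp
  have hval : (∑' k : ℕ, (C1 * (Real.exp (-x) * (x ^ k / (Nat.factorial k)))
      + (C2 * (Real.exp (-x) * ((k:ℝ) * x ^ k / (Nat.factorial k)))
      + C3 * (Real.exp (-x) * (((k:ℝ))^2 * x ^ k / (Nat.factorial k))))))
      = c * (x - x/(2*a) - a/2) := by
    rw [Summable.tsum_add hs1 (hs2.add hs3), Summable.tsum_add hs2 hs3, tsum_mul_left, tsum_mul_left,
      tsum_mul_left, tsum_mul_left, tsum_mul_left, tsum_mul_left,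
      tsum_exp, tsum_m1, tsum_m2]
    rw [hC1, hC2, hC3]
    linear_combination (c * ((n:ℝ) - a/2) - c * (n:ℝ)^2/(2*a) + (2 * c * (n:ℝ)/(2*a)) * x + (-c/(2*a)) * (x^2+x)) * h1
  rw [hval] at hle
  exact hle

end Phi4

lemma phiExt_nat (φ : ℕ → ℝ) (n : ℕ) : phiExt φ (n:ℝ) = φ n := by
  rw [phiExt, Nat.floor_natCast]
  simp

lemma poiExp_zero (φ : ℕ → ℝ) : poiExp φ 0 = φ 0 := by
  rw [poiExp]
  rw [tsum_eq_single 0]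
  · simp
  · intro k hk
    rcases Nat.exists_eq_succ_of_ne_zero hk with ⟨j, rfl⟩
    simp [zero_pow]

lemma poiExp_nonneg (φ : ℕ → ℝ) (hφnn : ∀ k, 0 ≤ φ k) (x : ℝ) (hx : 0 ≤ x) :
    0 ≤ poiExp φ x := by
  rw [poiExp]
  apply tsum_nonneg
  intro k
  have h1 : (0:ℝ) ≤ Real.exp (-x) * x ^ k / (Nat.factorial k) :=
    div_nonneg (mul_nonneg (Real.exp_pos _).le (pow_nonneg hx k)) (Nat.cast_nonneg _)
  exact mul_nonneg h1 (hφnn k)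


/-- The infimum of `α_φ` over `[0, ∞)` is attained, at a positive integer:
`inf_{x ≥ 0} α_φ(x) = min_{x ∈ ℕ, x ≥ 1} α_φ(x)`. -/
theorem stmt6 (φ : ℕ → ℝ) (hφnn : ∀ k, 0 ≤ φ k) (hφ0 : φ 0 = 0) (hφ1 : φ 1 = 1)
    (hφmono : Monotone φ)
    (hφconc : ∀ k, φ (k + 2) - φ (k + 1) ≤ φ (k + 1) - φ k) :
    ∃ N : ℕ, 1 ≤ N ∧ IsLeast (alphaRatio φ '' Set.Ici 0) (alphaRatio φ (N : ℝ)) := by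
  have hconc := poiExp_concaveOn hφnn hφ0 hφ1 hφmono hφconc
  have hφpos : ∀ n : ℕ, 1 ≤ n → 0 < φ n := by
    intro n hn
    calc (0:ℝ) < 1 := one_pos
      _ = φ 1 := hφ1.symm
      _ ≤ φ n := hφmono hn
  have hα : ∀ n : ℕ, 1 ≤ n → alphaRatio φ (n:ℝ) = poiExp φ (n:ℝ) / φ n := by
    intro n hn
    rw [alphaRatio, if_neg (by exact_mod_cast Nat.cast_ne_zero.mpr (by omega) : ¬ ((n:ℝ) = 0)), phiExt_nat]
  have hjen : ∀ n : ℕ, 1 ≤ n → alphaRatio φ (n:ℝ) ≤ 1 := by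
    intro n hn
    rw [hα n hn, div_le_one (hφpos n hn)]
    have := poiExp_le_phiExt hφnn hφ0 hφ1 hφmono hφconc (n:ℝ) (Nat.cast_nonneg n)
    rwa [phiExt_nat] at this
  have htail : ∀ δ : ℝ, 0 < δ → ∀ n : ℕ, 1 ≤ n → ((1/δ)/δ ≤ (n:ℝ)) →
      1 - δ ≤ alphaRatio φ (n:ℝ) := by
    intro δ hδ n hn hnM
    set a : ℝ := 1/δ with hadef
    have ha : 0 < a := by positivity
    have htl := poiExp_tail hφnn hφ0 hφ1 hφmono hφconc n hn a ha
    rw [hα n hn, le_div_iff₀ (hφpos n hn)]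
    have hnpos : (0:ℝ) < (n:ℝ) := by exact_mod_cast hn
    have e1 : (φ n / n) * ((n:ℝ) - (n:ℝ)/(2*a) - a/2) =
        φ n * (1 - 1/(2*a) - a/(2*(n:ℝ))) := by
      field_simp
    rw [e1] at htl
    have h2 : 1/(2*a) = δ/2 := by rw [hadef]; field_simp
    have h3 : a/(2*(n:ℝ)) ≤ δ/2 := by
      rw [div_le_div_iff₀ (by linarith) (by norm_num)]
      have : a ≤ δ * n := by
        rw [hadef] at hnM ⊢
        calc (1/δ) = ((1/δ)/δ) * δ := by field_simp
          _ ≤ (n:ℝ) * δ := by gcongr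
          _ = δ * n := by ring
      nlinarith
    have hφn := (hφpos n hn).le
    calc (1 - δ) * φ n ≤ (1 - 1/(2*a) - a/(2*(n:ℝ))) * φ n := by nlinarith
      _ = φ n * (1 - 1/(2*a) - a/(2*(n:ℝ))) := by ring
      _ ≤ poiExp φ (n:ℝ) := htl
  have hmain : ∃ N : ℕ, 1 ≤ N ∧ ∀ n : ℕ, 1 ≤ n →
      alphaRatio φ (N:ℝ) ≤ alphaRatio φ (n:ℝ) := by
    by_cases hall : ∀ n : ℕ, 1 ≤ n → alphaRatio φ ((1:ℕ):ℝ) ≤ alphaRatio φ (n:ℝ)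
    · exact ⟨1, le_refl 1, hall⟩
    · push_neg at hall
      obtain ⟨n₀, hn₀1, hn₀⟩ := hall
      set δ : ℝ := 1 - alphaRatio φ (n₀:ℝ) with hδdef
      have hδpos : 0 < δ := by
        have h1 := hjen 1 (le_refl 1)
        have := hn₀
        rw [hδdef]
        push_cast at h1 this ⊢
        linarith
      set M : ℕ := max n₀ (max 1 ⌈(1/δ)/δ⌉₊) with hMdef
      have h1M : 1 ≤ M := le_max_of_le_right (le_max_left _ _)
      obtain ⟨N, hNmem, hNmin⟩ := Finset.exists_min_image (Finset.Icc 1 M)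
        (fun n => alphaRatio φ (n:ℝ)) ⟨1, Finset.mem_Icc.mpr ⟨le_refl 1, h1M⟩⟩
      refine ⟨N, (Finset.mem_Icc.mp hNmem).1, ?_⟩
      intro n hn1
      rcases le_or_gt n M with hnM | hMn
      · exact hNmin n (Finset.mem_Icc.mpr ⟨hn1, hnM⟩)
      · have hceil : ((1/δ)/δ : ℝ) ≤ (n:ℝ) := by
          calc ((1/δ)/δ : ℝ) ≤ (⌈(1/δ)/δ⌉₊ : ℝ) := Nat.le_ceil _
            _ ≤ (M:ℝ) := by
                exact_mod_cast le_max_of_le_right (le_max_right 1 _)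
            _ ≤ (n:ℝ) := by exact_mod_cast hMn.le
        have h2 := htail δ hδpos n hn1 hceil
        have h4 : alphaRatio φ (N:ℝ) ≤ alphaRatio φ (n₀:ℝ) :=
          hNmin n₀ (Finset.mem_Icc.mpr ⟨hn₀1, le_max_left _ _⟩)
        have h5 : alphaRatio φ (n₀:ℝ) = 1 - δ := by rw [hδdef]; ring
        linarith
  obtain ⟨N, hN1, hNmin⟩ := hmain
  refine ⟨N, hN1, ⟨⟨(N:ℝ), Set.mem_Ici.mpr (Nat.cast_nonneg N), rfl⟩, ?_⟩⟩
  rintro y ⟨x, hx, rfl⟩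
  rw [Set.mem_Ici] at hx
  rcases eq_or_lt_of_le hx with hx0 | hxpos
  · rw [← hx0]
    have h0 : alphaRatio φ (0:ℝ) = 1 := by rw [alphaRatio, if_pos rfl]
    rw [h0]
    exact hjen N hN1
  · set m : ℕ := ⌊x⌋₊ with hm
    have hmx : (m:ℝ) ≤ x := Nat.floor_le hx
    have hxm1 : x < (m:ℝ) + 1 := Nat.lt_floor_add_one x
    set t : ℝ := x - m with ht
    have ht0 : 0 ≤ t := by rw [ht]; linarith
    have ht1 : t ≤ 1 := by rw [ht]; linarith
    have hm1R : ((m:ℝ)+1) ∈ Set.Ici (0:ℝ) := Set.mem_Ici.mpr (by positivity)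
    have hmR : (m:ℝ) ∈ Set.Ici (0:ℝ) := Set.mem_Ici.mpr (Nat.cast_nonneg m)
    have hxeq : (1-t) • (m:ℝ) + t • ((m:ℝ)+1) = x := by
      simp only [smul_eq_mul]
      rw [ht]
      ring
    have hkey : (1-t) * poiExp φ (m:ℝ) + t * poiExp φ ((m:ℝ)+1) ≤ poiExp φ x := by
      have := hconc.2 hmR hm1R (by linarith : (0:ℝ) ≤ 1 - t) ht0 (by ring)
      rw [hxeq] at this
      simpa [smul_eq_mul] using this
    have hαx : alphaRatio φ x = poiExp φ x / phiExt φ x := if_neg (ne_of_gt hxpos)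
    have hcast : ((m+1:ℕ):ℝ) = (m:ℝ)+1 := by push_cast; ring
    rcases Nat.eq_zero_or_pos m with hm0 | hm1
    · have hphiExt : phiExt φ x = x := by
        rw [phiExt, ← hm, hm0]
        simp [hφ0, hφ1]
      have hz : poiExp φ ((m:ℕ):ℝ) = 0 := by
        rw [hm0]
        push_cast
        rw [poiExp_zero, hφ0]
      have htx : t = x := by rw [ht, hm0]; simp
      have hge : poiExp φ 1 ≤ poiExp φ x / x := by
        rw [le_div_iff₀ hxpos]
        have : (m:ℝ) + 1 = 1 := by rw [hm0]; simp
        rw [this] at hkey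
        rw [hz] at hkey
        rw [htx] at hkey
        linarith
      have hα1 : alphaRatio φ ((1:ℕ):ℝ) = poiExp φ 1 := by
        rw [hα 1 (le_refl 1), hφ1]
        push_cast
        rw [div_one]
      have hNle1 := hNmin 1 (le_refl 1)
      rw [hαx, hphiExt]
      rw [hα1] at hNle1
      linarith
    · have hφm := hφpos m hm1
      have hφm1 := hφpos (m+1) (by omega)
      set β : ℝ := min (alphaRatio φ (m:ℝ)) (alphaRatio φ ((m+1:ℕ):ℝ)) with hβ
      have hb1 : β * φ m ≤ poiExp φ (m:ℝ) := by
        have h : β ≤ alphaRatio φ (m:ℝ) := min_le_left _ _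
        have h' : alphaRatio φ (m:ℝ) * φ m = poiExp φ (m:ℝ) := by
          rw [hα m hm1]; field_simp
        calc β * φ m ≤ alphaRatio φ (m:ℝ) * φ m :=
              mul_le_mul_of_nonneg_right h hφm.le
          _ = poiExp φ (m:ℝ) := h'
      have hb2 : β * φ (m+1) ≤ poiExp φ ((m:ℝ)+1) := by
        have h : β ≤ alphaRatio φ ((m+1:ℕ):ℝ) := min_le_right _ _
        have h' : alphaRatio φ ((m+1:ℕ):ℝ) * φ (m+1) = poiExp φ ((m:ℝ)+1) := by
          rw [hα (m+1) (by omega), hcast]; field_simp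
        calc β * φ (m+1) ≤ alphaRatio φ ((m+1:ℕ):ℝ) * φ (m+1) :=
              mul_le_mul_of_nonneg_right h hφm1.le
          _ = poiExp φ ((m:ℝ)+1) := h'
      have hd := d_nonneg hφnn hφ0 hφ1 hφmono hφconc m
      have hphiExt : phiExt φ x = φ m + t * (φ (m+1) - φ m) := by
        rw [phiExt, ← hm, ← ht]
      have hppos : 0 < phiExt φ x := by
        rw [hphiExt]
        nlinarith
      have hβx : β * phiExt φ x ≤ poiExp φ x := by
        rw [hphiExt]
        calc β * (φ m + t * (φ (m+1) - φ m))
            = (1-t) * (β * φ m) + t * (β * φ (m+1)) := by ring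
          _ ≤ (1-t) * poiExp φ (m:ℝ) + t * poiExp φ ((m:ℝ)+1) := by
              apply add_le_add
              · exact mul_le_mul_of_nonneg_left hb1 (by linarith)
              · exact mul_le_mul_of_nonneg_left hb2 ht0
          _ ≤ poiExp φ x := hkey
      have hNβ : alphaRatio φ (N:ℝ) ≤ β :=
        le_min (hNmin m hm1) (hNmin (m+1) (by omega))
      rw [hαx, le_div_iff₀ hppos]
      calc alphaRatio φ (N:ℝ) * phiExt φ x ≤ β * phiExt φ x :=
            mul_le_mul_of_nonneg_right hNβ hppos.le
        _ ≤ poiExp φ x := hβx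
end
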